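/- Let i, j be integers with 0 < i < j − 1, and set u₁⁽ⁱ⁾ = 4·cos²(πi/(2(i+1))) and x₂⁽ʲ⁾ = 4·cos²(π(j−1)/(2j+1)). If u₁⁽ⁱ⁾ < x₂⁽ʲ⁾, then |Z_i(x)·Z_j(x)| < 1 for every real x with u₁⁽ⁱ⁾ ≤ x ≤ x₂⁽ʲ⁾. -/

import Mathlib

set_option maxHeartbeats 1000000


open Polynomial Real

/-- The polynomial sequence `Z`: `Z 0 = 1`, `Z 1 = X - 1`,
`Z n = (X - 2) * Z (n-1) - Z (n-2)` for `n ≥ 2`. -/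
noncomputable def Z : ℕ → Polynomial ℝ
  | 0 => 1
  | 1 => X - 1
  | n + 2 => (X - 2) * Z (n + 1) - Z n

lemma Z_eval_cos : ∀ (n : ℕ) (t : ℝ),
    (Z n).eval (4 * Real.cos t ^ 2) * Real.sin t = Real.sin ((2 * (n : ℝ) + 1) * t) := by
  intro n
  induction n using Nat.twoStepInduction with
  | zero => intro t; simp [Z]
  | one =>
    intro t
    simp only [Z, eval_sub, eval_X, eval_one]
    push_cast
    rw [show (2 * (1 : ℝ) + 1) * t = 2 * t + t by ring, Real.sin_add, Real.sin_two_mul,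
      Real.cos_two_mul]
    ring
  | more n ih1 ih2 =>
    intro t
    have e1 := ih1 t
    have e2 := ih2 t
    simp only [Z, eval_sub, eval_mul, eval_X, eval_ofNat]
    push_cast at e1 e2 ⊢
    have h5 : (2 * ((n : ℝ) + 2) + 1) * t = (2 * (n : ℝ) + 3) * t + 2 * t := by ring
    have h3 : (2 * ((n : ℝ) + 1) + 1) * t = (2 * (n : ℝ) + 3) * t := by ring
    have h1 : (2 * (n : ℝ) + 1) * t = (2 * (n : ℝ) + 3) * t - 2 * t := by ring
    rw [h3] at e2
    rw [h1] at e1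
    rw [h5, Real.sin_add, Real.sin_sub] at *
    rw [Real.cos_two_mul, Real.sin_two_mul] at *
    linear_combination (4 * Real.cos t ^ 2 - 2) * e2 - e1

lemma cos_nat_pi : ∀ k : ℕ, Real.cos ((k : ℝ) * π) = (-1) ^ k := by
  intro k
  induction k with
  | zero => simp
  | succ m ih =>
    push_cast
    rw [show ((m : ℝ) + 1) * π = (m : ℝ) * π + π by ring, Real.cos_add_pi, ih]
    ring

lemma sin_odd_mul (k : ℕ) (y : ℝ) :
    Real.sin ((2 * (k : ℝ) + 1) * (π / 2) - y) = (-1) ^ k * Real.cos y := by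
  have h1 : (2 * (k : ℝ) + 1) * (π / 2) - y = (k : ℝ) * π + (π / 2 - y) := by ring
  rw [h1, Real.sin_add, Real.sin_nat_mul_pi, Real.cos_pi_div_two_sub,
    Real.sin_pi_div_two_sub]
  rw [cos_nat_pi]
  ring

theorem abs_ZZ_lt_one_middle (i j : ℕ) (hi : 0 < i) (hij : i + 1 < j)
    (h : 4 * Real.cos (π * i / (2 * (i + 1))) ^ 2 <
      4 * Real.cos (π * ((j : ℝ) - 1) / (2 * j + 1)) ^ 2) :
    ∀ x : ℝ, 4 * Real.cos (π * i / (2 * (i + 1))) ^ 2 ≤ x →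
      x ≤ 4 * Real.cos (π * ((j : ℝ) - 1) / (2 * j + 1)) ^ 2 →
      |(Z i).eval x * (Z j).eval x| < 1 := by
  intro x hx1 hx2
  have hπ : (0 : ℝ) < π := Real.pi_pos
  have hiR : (1 : ℝ) ≤ (i : ℝ) := by exact_mod_cast hi
  have hjR : (i : ℝ) + 2 ≤ (j : ℝ) := by exact_mod_cast hij
  obtain ⟨θi, hθidef⟩ : ∃ y : ℝ, y = π * i / (2 * ((i : ℝ) + 1)) := ⟨_, rfl⟩
  obtain ⟨θj, hθjdef⟩ : ∃ y : ℝ, y = π * ((j : ℝ) - 1) / (2 * j + 1) := ⟨_, rfl⟩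
  rw [← hθidef] at hx1
  rw [← hθjdef] at hx2
  have hθi_pos : 0 < θi := by
    rw [hθidef]; apply div_pos (by nlinarith) (by nlinarith)
  have hθi_lt : θi < π / 2 := by
    rw [hθidef, div_lt_iff₀ (by nlinarith)]
    nlinarith
  have hθj_pos : 0 < θj := by
    rw [hθjdef]; apply div_pos (by nlinarith) (by nlinarith)
  have hθj_lt : θj < π / 2 := by
    rw [hθjdef, div_lt_iff₀ (by nlinarith)]
    nlinarith
  have hci : 0 < Real.cos θi :=
    Real.cos_pos_of_mem_Ioo ⟨by linarith, hθi_lt⟩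
  have hcj : 0 < Real.cos θj :=
    Real.cos_pos_of_mem_Ioo ⟨by linarith, hθj_lt⟩
  have hcj1 : Real.cos θj < 1 := by
    have := Real.cos_lt_cos_of_nonneg_of_le_pi (le_refl 0) (by linarith) hθj_pos
    simpa using this
  have hx_pos : 0 < x := lt_of_lt_of_le (by positivity) hx1
  -- the substitution t = arccos (√x / 2)
  obtain ⟨t, htdef⟩ : ∃ y : ℝ, y = Real.arccos (Real.sqrt x / 2) := ⟨_, rfl⟩
  have hsqx_nonneg : 0 ≤ Real.sqrt x / 2 := by positivity
  have hsqx_le : Real.sqrt x / 2 ≤ 1 := by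
    have h4 : x ≤ 4 := by nlinarith [Real.neg_one_le_cos θj, Real.cos_le_one θj]
    have : Real.sqrt x ≤ Real.sqrt 4 := Real.sqrt_le_sqrt h4
    rw [show (4 : ℝ) = 2 ^ 2 by norm_num, Real.sqrt_sq (by norm_num)] at this
    linarith
  have hcost : Real.cos t = Real.sqrt x / 2 := by
    rw [htdef]; exact Real.cos_arccos (by linarith) hsqx_le
  have hx_eq : 4 * Real.cos t ^ 2 = x := by
    rw [hcost, div_pow, Real.sq_sqrt hx_pos.le]
    ring
  have hsqrt_u : Real.sqrt (4 * Real.cos θi ^ 2) = 2 * Real.cos θi := by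
    rw [show 4 * Real.cos θi ^ 2 = (2 * Real.cos θi) ^ 2 by ring,
      Real.sqrt_sq (by positivity)]
  have hsqrt_v : Real.sqrt (4 * Real.cos θj ^ 2) = 2 * Real.cos θj := by
    rw [show 4 * Real.cos θj ^ 2 = (2 * Real.cos θj) ^ 2 by ring,
      Real.sqrt_sq (by positivity)]
  have ht_le : t ≤ θi := by
    have h1 : Real.cos θi ≤ Real.sqrt x / 2 := by
      have := Real.sqrt_le_sqrt hx1
      rw [hsqrt_u] at this
      linarith
    calc t ≤ Real.arccos (Real.cos θi) := by
            rw [htdef]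
            apply (Real.strictAntiOn_arccos.le_iff_ge
              (by constructor <;> [linarith; exact hsqx_le])
              (by constructor <;> [linarith [hci]; linarith [Real.cos_le_one θi]])).mpr h1
      _ = θi := Real.arccos_cos hθi_pos.le (by linarith)
  have ht_ge : θj ≤ t := by
    have h1 : Real.sqrt x / 2 ≤ Real.cos θj := by
      have := Real.sqrt_le_sqrt hx2
      rw [hsqrt_v] at this
      linarith
    calc θj = Real.arccos (Real.cos θj) := (Real.arccos_cos hθj_pos.le (by linarith)).symm
      _ ≤ t := by
            rw [htdef]
            apply (Real.strictAntiOn_arccos.le_iff_ge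
              (by constructor <;> [linarith [hcj]; linarith [Real.cos_le_one θj]])
              (by constructor <;> [linarith; exact hsqx_le])).mpr h1
  have ht_pos : 0 < t := lt_of_lt_of_le hθj_pos ht_ge
  have ht_lt : t < π / 2 := lt_of_le_of_lt ht_le hθi_lt
  have hsin : 0 < Real.sin t := Real.sin_pos_of_pos_of_lt_pi ht_pos (by linarith only [ht_lt, hπ])
  obtain ⟨a, hadef⟩ : ∃ y : ℝ, y = 2 * (i : ℝ) + 1 := ⟨_, rfl⟩
  obtain ⟨b, hbdef⟩ : ∃ y : ℝ, y = 2 * (j : ℝ) + 1 := ⟨_, rfl⟩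
  -- closed forms
  have Ei : (Z i).eval x * Real.sin t = Real.sin (a * t) := by
    rw [← hx_eq, hadef]; exact Z_eval_cos i t
  have Ej : (Z j).eval x * Real.sin t = Real.sin (b * t) := by
    rw [← hx_eq, hbdef]; exact Z_eval_cos j t
  -- the angle φ = π/2 - t
  obtain ⟨φ, hφdef⟩ : ∃ y : ℝ, y = π / 2 - t := ⟨_, rfl⟩
  have hab : a + 2 ≤ b := by rw [hadef, hbdef]; linarith only [hjR]
  have ha1 : (3 : ℝ) ≤ a := by rw [hadef]; linarith only [hiR]
  have hb0 : (0 : ℝ) < b := by linarith only [ha1, hab]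
  have ha0 : (0 : ℝ) < a := by linarith only [ha1]
  have hφ1 : π / (2 * ((i : ℝ) + 1)) ≤ φ := by
    have e : π / 2 - θi = π / (2 * ((i : ℝ) + 1)) := by
      rw [hθidef]; field_simp; ring
    rw [hφdef, ← e]; linarith only [ht_le]
  have hφ2 : φ ≤ 3 * π / (2 * b) := by
    have e : π / 2 - θj = 3 * π / (2 * b) := by
      rw [hθjdef, hbdef]; field_simp; ring
    rw [hφdef, ← e]; linarith only [ht_ge]
  have hi1 : (0 : ℝ) < (i : ℝ) + 1 := by linarith only [hiR]
  have hsmall : 0 < π / (2 * ((i : ℝ) + 1)) := by positivity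
  have hφ_pos : 0 < φ := lt_of_lt_of_le hsmall hφ1
  obtain ⟨α, hαdef⟩ : ∃ y : ℝ, y = a * φ - π := ⟨_, rfl⟩
  obtain ⟨β, hβdef⟩ : ∃ y : ℝ, y = b * φ - π := ⟨_, rfl⟩
  -- reduction of sin (a t), sin (b t)
  have hsin_a : Real.sin (a * t) = (-1) ^ i * Real.cos (a * φ) := by
    rw [← sin_odd_mul i (a * φ)]
    congr 1
    rw [hadef, hφdef]; ring
  have hsin_b : Real.sin (b * t) = (-1) ^ j * Real.cos (b * φ) := by
    rw [← sin_odd_mul j (b * φ)]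
    congr 1
    rw [hbdef, hφdef]; ring
  have hcos_a : Real.cos (a * φ) = -Real.cos α := by
    rw [show a * φ = α + π by rw [hαdef]; ring, Real.cos_add_pi]
  have hcos_b : Real.cos (b * φ) = -Real.cos β := by
    rw [show b * φ = β + π by rw [hβdef]; ring, Real.cos_add_pi]
  -- numeric bounds on α, β
  have hbφ1 : b * (π / (2 * ((i : ℝ) + 1))) ≤ b * φ :=
    mul_le_mul_of_nonneg_left hφ1 hb0.le
  have haφ1 : a * (π / (2 * ((i : ℝ) + 1))) ≤ a * φ :=
    mul_le_mul_of_nonneg_left hφ1 ha0.le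
  have haφ2 : a * φ ≤ a * (3 * π / (2 * b)) :=
    mul_le_mul_of_nonneg_left hφ2 ha0.le
  have hbφ2 : b * φ ≤ 3 * π / 2 := by
    have h' := mul_le_mul_of_nonneg_left hφ2 hb0.le
    have e : b * (3 * π / (2 * b)) = 3 * π / 2 := by field_simp
    linarith only [h', e]
  have hα_lb : -(π / 2) < α := by
    rw [hαdef]
    have h1 : a * (π / (2 * ((i : ℝ) + 1))) = π - π / (2 * ((i : ℝ) + 1)) := by
      rw [hadef]; field_simp; ring
    have h2 : π / (2 * ((i : ℝ) + 1)) ≤ π / 4 := by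
      apply div_le_div_of_nonneg_left hπ.le (by norm_num) (by linarith only [hiR])
    linarith only [haφ1, h1, h2, hπ]
  have hα_ub : α < π / 2 := by
    rw [hαdef]
    have h1 : a * (3 * π / (2 * b)) < 3 * π / 2 := by
      rw [show a * (3 * π / (2 * b)) = a * (3 * π) / (2 * b) by ring,
        div_lt_iff₀ (by positivity)]
      linarith only [mul_pos hπ (show (0 : ℝ) < b - a by linarith only [hab])]
    linarith only [haφ2, h1]
  have hβ_lb : 0 < β := by
    rw [hβdef]
    have h1 : π < b * (π / (2 * ((i : ℝ) + 1))) := by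
      rw [show b * (π / (2 * ((i : ℝ) + 1))) = b * π / (2 * ((i : ℝ) + 1)) by ring,
        lt_div_iff₀ (by positivity)]
      have hbig : 2 * ((i : ℝ) + 1) + 2 ≤ b := by rw [hbdef]; linarith only [hjR]
      linarith only [mul_pos hπ (show (0 : ℝ) < b - 2 * ((i : ℝ) + 1) by linarith only [hbig])]
    linarith only [hbφ1, h1]
  have hβ_ub : β ≤ π / 2 := by rw [hβdef]; linarith only [hbφ2]
  have hsum : 2 * φ ≤ α + β := by
    have key : 2 * π ≤ (a + b - 2) * (π / (2 * ((i : ℝ) + 1))) := by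
      rw [show (a + b - 2) * (π / (2 * ((i : ℝ) + 1)))
          = (a + b - 2) * π / (2 * ((i : ℝ) + 1)) by ring,
        le_div_iff₀ (by positivity)]
      have hbig : 4 * ((i : ℝ) + 1) ≤ a + b - 2 := by rw [hadef, hbdef]; linarith only [hjR]
      linarith only [mul_nonneg hπ.le (show (0 : ℝ) ≤ a + b - 2 - 4 * ((i : ℝ) + 1) by linarith only [hbig])]
    have h2 : (a + b - 2) * (π / (2 * ((i : ℝ) + 1))) ≤ (a + b - 2) * φ :=
      mul_le_mul_of_nonneg_left hφ1 (by linarith only [ha1, hab])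
    have h3 : (a + b - 2) * φ = a * φ + b * φ - 2 * φ := by ring
    rw [hαdef, hβdef]; linarith only [key, h2, h3]
  have hδ_pos : 0 < β - α := by
    rw [hαdef, hβdef]
    have : a * φ < b * φ := by
      apply mul_lt_mul_of_pos_right _ hφ_pos
      linarith only [hab]
    linarith only [this]
  have hδ_ub : β - α < 3 * π / 2 := by
    rw [hαdef, hβdef]
    have h0 : 0 < a * φ := mul_pos ha0 hφ_pos
    linarith only [hbφ2, h0]
  -- the key trigonometric inequality
  have hcosα : 0 ≤ Real.cos α :=
    Real.cos_nonneg_of_mem_Icc ⟨hα_lb.le, hα_ub.le⟩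
  have hcosβ : 0 ≤ Real.cos β :=
    Real.cos_nonneg_of_mem_Icc ⟨by linarith only [hβ_lb, hπ], hβ_ub⟩
  have hid : Real.cos α * Real.cos β =
      (Real.cos (β - α) + Real.cos (α + β)) / 2 := by
    rw [Real.cos_sub, Real.cos_add]; ring
  have hsum_ub : α + β < π := by linarith only [hα_ub, hβ_ub]
  have key : Real.cos α * Real.cos β < Real.cos φ ^ 2 := by
    rw [hid, Real.cos_sq]
    rcases eq_or_lt_of_le hsum with heq | hlt
    · -- α + β = 2φ : use cos (β - α) < 1
      have h1 : Real.cos (β - α) < 1 := by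
        rcases le_or_gt (β - α) π with hle | hgt
        · have := Real.cos_lt_cos_of_nonneg_of_le_pi (le_refl 0) hle hδ_pos
          simpa using this
        · have := Real.cos_nonpos_of_pi_div_two_le_of_le (x := β - α) (by linarith only [hgt, hπ])
            (by linarith only [hδ_ub])
          linarith only [this]
      have h2 : Real.cos (α + β) = Real.cos (2 * φ) := by rw [← heq]
      linarith only [h1, h2]
    · have h1 : Real.cos (α + β) < Real.cos (2 * φ) := by
        apply Real.cos_lt_cos_of_nonneg_of_le_pi (by positivity) hsum_ub.le hlt
      linarith only [h1, Real.cos_le_one (β - α)]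
  have hcosφ : Real.cos φ = Real.sin t := by
    rw [hφdef, Real.cos_pi_div_two_sub]
  -- assemble
  have habs : |Real.sin (a * t) * Real.sin (b * t)| < Real.sin t ^ 2 := by
    have e : Real.sin (a * t) * Real.sin (b * t) =
        (-1) ^ i * (-1) ^ j * (Real.cos α * Real.cos β) := by
      rw [hsin_a, hsin_b, hcos_a, hcos_b]; ring
    rw [e, abs_mul, abs_mul, abs_pow, abs_pow, abs_neg, abs_one, one_pow, one_pow,
      one_mul, one_mul, abs_of_nonneg (mul_nonneg hcosα hcosβ), ← hcosφ]
    exact key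
  have hprod : (Z i).eval x * (Z j).eval x * Real.sin t ^ 2 =
      Real.sin (a * t) * Real.sin (b * t) := by
    rw [← Ei, ← Ej]; ring
  have h2 : |(Z i).eval x * (Z j).eval x| * Real.sin t ^ 2 < 1 * Real.sin t ^ 2 := by
    calc |(Z i).eval x * (Z j).eval x| * Real.sin t ^ 2
        = |(Z i).eval x * (Z j).eval x * Real.sin t ^ 2| := by
          rw [abs_mul ((Z i).eval x * (Z j).eval x) (Real.sin t ^ 2),
            abs_of_nonneg (sq_nonneg (Real.sin t))]
      _ = |Real.sin (a * t) * Real.sin (b * t)| := by rw [hprod]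
      _ < Real.sin t ^ 2 := habs
      _ = 1 * Real.sin t ^ 2 := by ring
  exact lt_of_mul_lt_mul_right h2 (sq_nonneg _)
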